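/- Let P, Q : ℤ → ℝ with P(n) ≠ 0 for all n, and set P̂(n) = 1/P(n), Q̂(n) = Q(n+1)/(P(n)P(n+1)). Then for every pair ξ = (ξ₁, ξ₂) of functions ℤ → ℝ one has (𝒥 ∘ 𝒫₂ ∘ 𝒥*)(ξ) = 𝒫̂₂(ξ), where 𝒫̂₂ is the operator 𝒫₂ with P replaced by P̂, Q replaced by Q̂, and the shift Λ replaced by Λ⁻¹ (equivalently, all superscripts + and − interchanged): 𝒫̂₂(ξ) = ( P̂((Q̂ξ₂)⁻ − Q̂ξ₂), Q̂(P̂ξ₁ − (P̂ξ₁)⁺) + Q̂((Q̂ξ₂)⁻ − (Q̂ξ₂)⁺) ). -/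

import Mathlib

/-- The shift by `e`: `(shiftE e f) n = f (n + e)`; `shiftE 1 = Λ`, `shiftE (-1) = Λ⁻¹`. -/
def shiftE (e : ℤ) (f : ℤ → ℝ) : ℤ → ℝ := fun n => f (n + e)

/-- The second Hamiltonian operator of the Ablowitz–Ladik hierarchy, with the shift `Λ`
replaced by `Λᵉ` (so `e = 1` gives `𝒫₂` and `e = -1` gives `𝒫₂` with all the
superscripts `+` and `−` interchanged):
`𝒫₂(ξ) = ( P((Qξ₂)⁺ − Qξ₂) , Q(Pξ₁ − (Pξ₁)⁻) + Q((Qξ₂)⁺ − (Qξ₂)⁻) )`. -/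
def P2gen (e : ℤ) (P Q : ℤ → ℝ) (ξ : (ℤ → ℝ) × (ℤ → ℝ)) : (ℤ → ℝ) × (ℤ → ℝ) :=
  (P * (shiftE e (Q * ξ.2) - Q * ξ.2),
   Q * (P * ξ.1 - shiftE (-e) (P * ξ.1))
     + Q * (shiftE e (Q * ξ.2) - shiftE (-e) (Q * ξ.2)))

/-- The gauge operator
`𝒥(ξ) = ( −ξ₁/P², −(Q⁺/(P²P⁺))ξ₁ − (Q⁺/(P(P⁺)²))ξ₁⁺ + ξ₂⁺/(PP⁺) )`. -/
noncomputable def Jgauge (P Q : ℤ → ℝ) (ξ : (ℤ → ℝ) × (ℤ → ℝ)) : (ℤ → ℝ) × (ℤ → ℝ) :=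
  (fun n => -ξ.1 n / P n ^ 2,
   fun n => -(Q (n + 1) / (P n ^ 2 * P (n + 1))) * ξ.1 n
     - (Q (n + 1) / (P n * P (n + 1) ^ 2)) * ξ.1 (n + 1)
     + ξ.2 (n + 1) / (P n * P (n + 1)))

/-- The gauge operator
`𝒥*(ξ) = ( −ξ₁/P² − (Q⁺/(P²P⁺))ξ₂ − (Q/(P²P⁻))ξ₂⁻, ξ₂⁻/(PP⁻) )`. -/
noncomputable def JgaugeStar (P Q : ℤ → ℝ) (ξ : (ℤ → ℝ) × (ℤ → ℝ)) : (ℤ → ℝ) × (ℤ → ℝ) :=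
  (fun n => -ξ.1 n / P n ^ 2 - (Q (n + 1) / (P n ^ 2 * P (n + 1))) * ξ.2 n
     - (Q n / (P n ^ 2 * P (n - 1))) * ξ.2 (n - 1),
   fun n => ξ.2 (n - 1) / (P n * P (n - 1)))

set_option maxHeartbeats 1000000 in
/-- With `P̂(n) = 1/P(n)` and `Q̂(n) = Q(n+1)/(P(n)P(n+1))`, one has
`𝒥 ∘ 𝒫₂ ∘ 𝒥* = 𝒫̂₂`, where `𝒫̂₂` is the operator `𝒫₂` with `P` replaced by `P̂`,
`Q` replaced by `Q̂`, and the shift `Λ` replaced by `Λ⁻¹`. -/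
theorem gauge_P2_eq_P2hat (P Q : ℤ → ℝ) (hP : ∀ n : ℤ, P n ≠ 0) :
    ∀ ξ : (ℤ → ℝ) × (ℤ → ℝ),
      (Jgauge P Q ∘ P2gen 1 P Q ∘ JgaugeStar P Q) ξ =
        P2gen (-1) (fun n => 1 / P n) (fun n => Q (n + 1) / (P n * P (n + 1))) ξ := by
  intro ξ
  obtain ⟨x, y⟩ := ξ
  unfold Jgauge P2gen JgaugeStar shiftE
  simp only [Function.comp_apply, Prod.mk.injEq, Pi.mul_apply, Pi.sub_apply, Pi.add_apply]
  constructor <;> funext n <;>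
  · have h1 : n + 1 - 1 = n := by ring
    have h2 : n - 1 + 1 = n := by ring
    have h3 : n + -1 = n - 1 := by ring
    have h4 : n + -1 + 1 = n := by ring
    have h5 : n + 1 + 1 - 1 = n + 1 := by ring
    have h6 : n + 1 + -1 = n := by ring
    simp only [h1, h2, h3, h4, h5, h6, Pi.mul_apply, Pi.sub_apply, Pi.add_apply]
    have e1 := hP n
    have e2 := hP (n+1)
    have e3 := hP (n-1)
    have e4 := hP (n+1+1)
    have e5 := hP (-1+n)
    have e6 := hP (1+n)
    have e7 := hP (2+n)
    field_simp
    ring_nf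
    all_goals field_simp
    all_goals ring
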